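/- Let n ∈ ℕ. Let φ : ℝ → ℝ be continuous, vanishing outside (−2^{−4}, 2^{−4}), with ∫_ℝ x^m φ(x) dx = 0 for every integer 0 ≤ m ≤ n+1, and let Φ_{n+1} denote its (n+1)-fold iterated primitive. Let ψ : ℝ → ℝ be locally integrable and suppose there are real numbers A_0, A_1 and c_0,…,c_{n−1} such that ψ(x) = A_0 (x−1/2)^n + Σ_{j=0}^{n−1} c_j (x−1/2)^j for all x ∈ [0, 1/2] and ψ(x) = A_1 (x−1/2)^n + Σ_{j=0}^{n−1} c_j (x−1/2)^j for all x ∈ [1/2, 1] (the same lower-order coefficients on both halves). Then for every x ∈ [1/4, 3/4], |(φ*ψ)(x)| = n! · |A_1 − A_0| · |Φ_{n+1}(x − 1/2)|. -/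

import Mathlib

open MeasureTheory Set Finset Real

/-- The `j`-fold iterated primitive of `φ`: `Φ_0 = φ` and
`Φ_j(x) = ∫_{-∞}^x Φ_{j-1}(t) dt`. -/
noncomputable def iterPrim (φ : ℝ → ℝ) : ℕ → ℝ → ℝ
  | 0 => φ
  | j + 1 => fun x => ∫ t in Set.Iic x, iterPrim φ j t

set_option linter.unusedVariables false

section Aux
open intervalIntegral

variable {φ : ℝ → ℝ}

/-- moment primitive -/
noncomputable def primM (φ : ℝ → ℝ) (i : ℕ) (u : ℝ) : ℝ := ∫ s in (-1:ℝ)..u, s ^ i * φ s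

/-- Cauchy kernel integral -/
noncomputable def cauchyI (φ : ℝ → ℝ) (j : ℕ) (u : ℝ) : ℝ :=
  ∫ s in (-1:ℝ)..u, (u - s) ^ j * φ s

variable (hcont : Continuous φ)
  (hφ0 : ∀ x : ℝ, x ∉ Set.Ioo (-(1/16) : ℝ) (1/16) → φ x = 0)

include hφ0 in
lemma phi_zero_left {x : ℝ} (hx : x ≤ -(1/16)) : φ x = 0 := by
  apply hφ0; rintro ⟨h1, h2⟩; linarith

include hφ0 in
lemma hcs : HasCompactSupport φ := by
  apply HasCompactSupport.intro (isCompact_Icc (a := -(1/16 : ℝ)) (b := 1/16))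
  intro x hx
  apply hφ0
  rintro ⟨h1, h2⟩
  exact hx ⟨h1.le, h2.le⟩

include hcont hφ0 in
lemma integrable_pow_mul (i : ℕ) : Integrable (fun s : ℝ => s ^ i * φ s) := by
  refine Continuous.integrable_of_hasCompactSupport (by continuity) ?_
  exact HasCompactSupport.mul_left (hcs hφ0)

include hcont in
lemma primM_hasDerivAt (i : ℕ) (u : ℝ) :
    HasDerivAt (primM φ i) (u ^ i * φ u) u := by
  have hc : Continuous fun s : ℝ => s ^ i * φ s := by continuity
  exact integral_hasDerivAt_right (hc.intervalIntegrable _ _)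
    (hc.stronglyMeasurableAtFilter _ _) hc.continuousAt

include hφ0 in
lemma primM_zero (i : ℕ) {u : ℝ} (hu : u ≤ -(1/16)) : primM φ i u = 0 := by
  have : ∀ s ∈ Set.uIcc (-1:ℝ) u, s ^ i * φ s = 0 := by
    intro s hs
    have hs' : s ≤ -(1/16) := by
      rcases le_total u (-1:ℝ) with h | h
      · rw [Set.uIcc_of_ge h] at hs; linarith [hs.2]
      · rw [Set.uIcc_of_le h] at hs; linarith [hs.2]
    rw [phi_zero_left hφ0 hs', mul_zero]
  calc primM φ i u = ∫ s in (-1:ℝ)..u, (0:ℝ) := intervalIntegral.integral_congr this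
    _ = 0 := intervalIntegral.integral_zero

include hcont in
lemma cauchyI_eq_sum (j : ℕ) (u : ℝ) :
    cauchyI φ j u = ∑ i ∈ range (j+1),
      ((-1:ℝ) ^ (i + j) * (j.choose i : ℝ)) * (u ^ i * primM φ (j - i) u) := by
  unfold cauchyI primM
  have key : ∀ s : ℝ, (u - s) ^ j * φ s =
      ∑ i ∈ range (j+1), ((-1:ℝ) ^ (i + j) * (j.choose i : ℝ) * u ^ i) * (s ^ (j - i) * φ s) := by
    intro s
    rw [sub_pow, Finset.sum_mul]
    exact Finset.sum_congr rfl fun i _ => by ring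
  calc (∫ s in (-1:ℝ)..u, (u - s) ^ j * φ s)
      = ∫ s in (-1:ℝ)..u, ∑ i ∈ range (j+1),
          ((-1:ℝ) ^ (i + j) * (j.choose i : ℝ) * u ^ i) * (s ^ (j - i) * φ s) := by
        exact intervalIntegral.integral_congr fun s _ => key s
    _ = ∑ i ∈ range (j+1), ∫ s in (-1:ℝ)..u,
          ((-1:ℝ) ^ (i + j) * (j.choose i : ℝ) * u ^ i) * (s ^ (j - i) * φ s) := by
        apply intervalIntegral.integral_finset_sum
        intro i _
        exact (continuous_const.mul ((continuous_pow _).mul hcont)).intervalIntegrable _ _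
    _ = ∑ i ∈ range (j+1), ((-1:ℝ) ^ (i + j) * (j.choose i : ℝ)) *
          (u ^ i * ∫ s in (-1:ℝ)..u, s ^ (j - i) * φ s) := by
        refine Finset.sum_congr rfl fun i _ => ?_
        rw [intervalIntegral.integral_const_mul]; ring

include hcont hφ0 in
lemma cauchyI_zero (j : ℕ) {u : ℝ} (hu : u ≤ -(1/16)) : cauchyI φ j u = 0 := by
  rw [cauchyI_eq_sum hcont]
  refine Finset.sum_eq_zero fun i _ => ?_
  rw [primM_zero hφ0 _ hu]; ring

include hcont in
lemma cauchyI_continuous (j : ℕ) : Continuous (cauchyI φ j) := by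
  have : cauchyI φ j = fun u => ∑ i ∈ range (j+1),
      ((-1:ℝ) ^ (i + j) * (j.choose i : ℝ)) * (u ^ i * primM φ (j - i) u) :=
    funext fun u => cauchyI_eq_sum hcont j u
  rw [this]
  refine continuous_finset_sum _ fun i _ => Continuous.mul continuous_const ?_
  refine (continuous_pow i).mul ?_
  exact continuous_iff_continuousAt.2 fun u => (primM_hasDerivAt hcont _ u).continuousAt

include hcont in
lemma cauchyI_hasDerivAt (j : ℕ) (u : ℝ) :
    HasDerivAt (cauchyI φ (j+1)) (((j:ℝ)+1) * cauchyI φ j u) u := by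
  have hfe : cauchyI φ (j+1) = fun v => ∑ i ∈ range (j+2),
      ((-1:ℝ) ^ (i + (j+1)) * ((j+1).choose i : ℝ)) * (v ^ i * primM φ (j+1-i) v) :=
    funext fun v => cauchyI_eq_sum hcont (j+1) v
  rw [hfe]
  have hd : HasDerivAt (fun v => ∑ i ∈ range (j+2),
      ((-1:ℝ) ^ (i + (j+1)) * ((j+1).choose i : ℝ)) * (v ^ i * primM φ (j+1-i) v))
      (∑ i ∈ range (j+2), ((-1:ℝ) ^ (i + (j+1)) * ((j+1).choose i : ℝ)) *
        (((i:ℝ) * u ^ (i-1)) * primM φ (j+1-i) u + u ^ i * (u ^ (j+1-i) * φ u))) u := by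
    refine HasDerivAt.fun_sum fun i _ => HasDerivAt.const_mul _ ?_
    exact (hasDerivAt_pow i u).mul (primM_hasDerivAt hcont _ u)
  convert hd using 1
  -- algebra
  have hsplit : ∀ i ∈ range (j+2),
      ((-1:ℝ) ^ (i + (j+1)) * ((j+1).choose i : ℝ)) *
        (((i:ℝ) * u ^ (i-1)) * primM φ (j+1-i) u + u ^ i * (u ^ (j+1-i) * φ u))
      = ((-1:ℝ) ^ (i + (j+1)) * ((j+1).choose i : ℝ)) *
          (((i:ℝ) * u ^ (i-1)) * primM φ (j+1-i) u)
        + ((-1:ℝ) ^ i * ((j+1).choose i : ℝ)) * ((-1:ℝ) ^ (j+1) * (u ^ (j+1) * φ u)) := by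
    intro i hi
    rw [Finset.mem_range] at hi
    have h2 : u ^ i * (u ^ (j+1-i) * φ u) = u ^ (j+1) * φ u := by
      rw [← mul_assoc, ← pow_add]
      congr 2
      omega
    rw [mul_add, h2, pow_add]; ring
  rw [Finset.sum_congr rfl hsplit, Finset.sum_add_distrib, ← Finset.sum_mul]
  have halt : (∑ i ∈ range (j+2), ((-1:ℝ) ^ i * ((j+1).choose i : ℝ))) = 0 := by
    have h0 := Int.alternating_sum_range_choose_of_ne (n := j+1) (Nat.succ_ne_zero j)
    have : ((∑ m ∈ range (j+2), ((-1)^m * (j+1).choose m : ℤ) : ℤ) : ℝ) = 0 := by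
      rw [h0]; norm_num
    push_cast at this
    exact this
  rw [halt, zero_mul, add_zero]
  rw [Finset.sum_range_succ']
  have h00 : ((-1:ℝ) ^ (0 + (j+1)) * (((j+1).choose 0 : ℕ) : ℝ)) *
      ((((0:ℕ):ℝ)) * u ^ (0-1) * primM φ (j+1-0) u) = 0 := by
    norm_num
  rw [h00, add_zero, cauchyI_eq_sum hcont, Finset.mul_sum]
  refine (Finset.sum_congr rfl fun k hk => ?_).symm
  rw [Finset.mem_range] at hk
  have hsub : j + 1 - (k+1) = j - k := by omega
  have hch : (((j+1).choose (k+1) : ℕ) : ℝ) * ((k:ℝ)+1) = ((j:ℝ)+1) * ((j.choose k : ℕ) : ℝ) := by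
    have h := Nat.add_one_mul_choose_eq j k
    have h2 : ((j+1) * j.choose k : ℕ) = ((j+1).choose (k+1) * (k+1) : ℕ) := by
      simpa [Nat.succ_eq_add_one] using h
    have h3 : (((j+1) * j.choose k : ℕ) : ℝ) = (((j+1).choose (k+1) * (k+1) : ℕ) : ℝ) := by
      exact_mod_cast h2
    push_cast at h3
    linarith
  have hsgn : ((-1:ℝ)) ^ (k + 1 + (j+1)) = (-1:ℝ) ^ (k + j) := by
    have : k + 1 + (j + 1) = (k + j) + 2 := by omega
    rw [this, pow_add]; norm_num
  rw [hsub, hsgn]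
  push_cast
  linear_combination ((-1:ℝ)^(k+j) * (u ^ k * primM φ (j-k) u)) * hch

lemma integrableOn_Iic_of {f : ℝ → ℝ} (hf : Continuous f)
    (hf0 : ∀ x : ℝ, x ≤ -(1/16) → f x = 0) (u : ℝ) : IntegrableOn f (Set.Iic u) := by
  have hsub : Set.Iic u ⊆ Set.Iic (-(1/16) : ℝ) ∪ Set.Icc (-(1/16) : ℝ) (max u 0) := by
    intro x hx
    rcases le_or_gt x (-(1/16) : ℝ) with h | h
    · exact Or.inl h
    · exact Or.inr ⟨h.le, le_trans hx (le_max_left _ _)⟩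
  refine IntegrableOn.mono_set ?_ hsub
  apply IntegrableOn.union
  · refine (integrableOn_congr_fun (g := fun _ => (0:ℝ)) (fun x hx => hf0 x hx)
      measurableSet_Iic).2 ?_
    exact integrableOn_zero
  · exact hf.continuousOn.integrableOn_Icc

lemma integral_Iic_eq_intervalIntegral {f : ℝ → ℝ} (hf : Continuous f)
    (hf0 : ∀ x : ℝ, x ≤ -(1/16) → f x = 0) (u : ℝ) :
    ∫ t in Set.Iic u, f t = ∫ t in (-1:ℝ)..u, f t := by
  rcases le_or_gt u (-1 : ℝ) with h | h
  · rw [setIntegral_eq_zero_of_forall_eq_zero (fun x hx => hf0 x (by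
      simp only [Set.mem_Iic] at hx; linarith))]
    rw [intervalIntegral.integral_congr (g := fun _ => (0:ℝ)) (fun s hs => by
      have : s ≤ -(1/16 : ℝ) := by
        rw [Set.uIcc_of_ge h] at hs
        linarith [hs.2]
      exact hf0 s this)]
    simp
  · have hsplit : Set.Iic u = Set.Iic (-1 : ℝ) ∪ Set.Ioc (-1 : ℝ) u := by
      ext t; simp only [Set.mem_union, Set.mem_Iic, Set.mem_Ioc]
      constructor
      · intro ht; rcases le_or_gt t (-1:ℝ) with h' | h'
        · exact Or.inl h'
        · exact Or.inr ⟨h', ht⟩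
      · rintro (h' | ⟨_, h'⟩)
        · linarith
        · exact h'
    rw [hsplit, setIntegral_union (by simp [Set.disjoint_left]; intro x h1 h2; linarith)
      measurableSet_Ioc
      ((integrableOn_Iic_of hf hf0 (-1)))
      (((integrableOn_Iic_of hf hf0 u).mono_set (fun x hx => hx.2)))]
    rw [setIntegral_eq_zero_of_forall_eq_zero (fun x hx => hf0 x (by
      simp only [Set.mem_Iic] at hx; linarith)), zero_add]
    rw [intervalIntegral.integral_of_le h.le]

include hcont hφ0 in
lemma iterPrim_eq_cauchyI : ∀ j u, iterPrim φ (j+1) u = cauchyI φ j u / (j.factorial : ℝ) := by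
  intro j
  induction j with
  | zero =>
    intro u
    show (∫ t in Set.Iic u, φ t) = cauchyI φ 0 u / ((0:ℕ).factorial : ℝ)
    rw [integral_Iic_eq_intervalIntegral hcont (fun x hx => phi_zero_left hφ0 hx) u]
    have : cauchyI φ 0 u = ∫ t in (-1:ℝ)..u, φ t :=
      intervalIntegral.integral_congr fun s _ => by simp
    rw [this]
    norm_num
  | succ j ih =>
    intro u
    have hQc : Continuous (fun t => cauchyI φ j t / (j.factorial : ℝ)) :=
      (cauchyI_continuous hcont j).div_const _
    have hQ0 : ∀ t : ℝ, t ≤ -(1/16) → cauchyI φ j t / (j.factorial : ℝ) = 0 := by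
      intro t ht; rw [cauchyI_zero hcont hφ0 j ht, zero_div]
    have step1 : iterPrim φ (j+2) u = ∫ t in Set.Iic u, cauchyI φ j t / (j.factorial : ℝ) := by
      show (∫ t in Set.Iic u, iterPrim φ (j+1) t) = _
      congr 1
      exact funext fun t => ih t
    rw [step1, integral_Iic_eq_intervalIntegral hQc hQ0 u]
    -- compare with cauchyI (j+1) / (j+1)! via derivatives
    set G : ℝ → ℝ := fun v => ∫ t in (-1:ℝ)..v, cauchyI φ j t / (j.factorial : ℝ) with hGdef
    set C : ℝ → ℝ := fun v => cauchyI φ (j+1) v / ((j+1).factorial : ℝ) with hCdef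
    have hG : ∀ v, HasDerivAt G (cauchyI φ j v / (j.factorial : ℝ)) v := fun v =>
      intervalIntegral.integral_hasDerivAt_right (hQc.intervalIntegrable _ _)
        (hQc.stronglyMeasurableAtFilter _ _) hQc.continuousAt
    have hC : ∀ v, HasDerivAt C (cauchyI φ j v / (j.factorial : ℝ)) v := by
      intro v
      have h1 := (cauchyI_hasDerivAt hcont j v).div_const ((j+1).factorial : ℝ)
      refine h1.congr_deriv ?_
      rw [Nat.factorial_succ]
      have hjf : ((j.factorial : ℕ) : ℝ) ≠ 0 := Nat.cast_ne_zero.2 (Nat.factorial_ne_zero j)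
      push_cast
      field_simp
    have hD : Differentiable ℝ (fun v => G v - C v) := fun v =>
      ((hG v).sub (hC v)).differentiableAt
    have hD0 : ∀ v, deriv (fun v => G v - C v) v = 0 := fun v => by
      rw [((hG v).fun_sub (hC v)).deriv]; ring
    have hconst := is_const_of_deriv_eq_zero hD hD0 u (-1)
    have hGm1 : G (-1) = 0 := intervalIntegral.integral_same
    have hCm1 : C (-1) = 0 := by
      show cauchyI φ (j+1) (-1) / _ = 0
      rw [cauchyI_zero hcont hφ0 (j+1) (by norm_num), zero_div]
    have : G u = C u := by
      have := hconst
      rw [hGm1, hCm1] at this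
      linarith [this]
    exact this

include hcont hφ0 in
lemma integrable_sub_pow_mul (u : ℝ) (m : ℕ) :
    Integrable (fun y : ℝ => (u - y) ^ m * φ y) := by
  refine Continuous.integrable_of_hasCompactSupport ?_ (HasCompactSupport.mul_left (hcs hφ0))
  exact ((continuous_const.sub continuous_id).pow m).mul hcont

include hcont hφ0 in
lemma moment_vanish {n : ℕ} (hmom : ∀ m : ℕ, m ≤ n + 1 → ∫ x : ℝ, x ^ m * φ x = 0)
    (u : ℝ) {m : ℕ} (hm : m ≤ n + 1) : ∫ y : ℝ, (u - y) ^ m * φ y = 0 := by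
  have key : ∀ y : ℝ, (u - y) ^ m * φ y =
      ∑ i ∈ range (m+1), ((-1:ℝ) ^ (i + m) * (m.choose i : ℝ) * u ^ i) * (y ^ (m - i) * φ y) := by
    intro y
    rw [sub_pow, Finset.sum_mul]
    exact Finset.sum_congr rfl fun i _ => by ring
  simp only [key]
  rw [integral_finset_sum _ (fun i _ => (integrable_pow_mul hcont hφ0 (m - i)).const_mul _)]
  refine Finset.sum_eq_zero fun i _ => ?_
  rw [MeasureTheory.integral_const_mul, hmom (m - i) (le_trans (Nat.sub_le m i) hm), mul_zero]

end Aux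
theorem stmt_3
    (n : ℕ) (φ : ℝ → ℝ)
    (hcont : Continuous φ)
    (hsupp : ∀ x : ℝ, x ∉ Set.Ioo (-(2 : ℝ) ^ (-4 : ℤ)) ((2 : ℝ) ^ (-4 : ℤ)) → φ x = 0)
    (hmom : ∀ m : ℕ, m ≤ n + 1 → ∫ x : ℝ, x ^ m * φ x = 0)
    (ψ : ℝ → ℝ) (hψ : MeasureTheory.LocallyIntegrable ψ)
    (A₀ A₁ : ℝ) (c : ℕ → ℝ)
    (hleft : ∀ x ∈ Set.Icc (0 : ℝ) (1 / 2),
      ψ x = A₀ * (x - 1 / 2) ^ n + ∑ j ∈ Finset.range n, c j * (x - 1 / 2) ^ j)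
    (hright : ∀ x ∈ Set.Icc (1 / 2 : ℝ) 1,
      ψ x = A₁ * (x - 1 / 2) ^ n + ∑ j ∈ Finset.range n, c j * (x - 1 / 2) ^ j) :
    ∀ x ∈ Set.Icc (1 / 4 : ℝ) (3 / 4),
      |∫ y : ℝ, φ y * ψ (x - y)| =
        (n.factorial : ℝ) * |A₁ - A₀| * |iterPrim φ (n + 1) (x - 1 / 2)| := by
  have ha : ((2:ℝ) ^ (-4 : ℤ)) = 1/16 := by norm_num
  rw [ha] at hsupp
  intro x hx
  obtain ⟨hx1, hx2⟩ := hx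
  set u : ℝ := x - 1/2 with hu
  -- pointwise decomposition of the integrand
  have key : ∀ y : ℝ, φ y * ψ (x - y) =
      (A₀ * ((u - y) ^ n * φ y) + ∑ j ∈ Finset.range n, c j * ((u - y) ^ j * φ y))
      + (A₁ - A₀) * Set.indicator (Set.Iic u) (fun y => (u - y) ^ n * φ y) y := by
    intro y
    by_cases hy : y ∈ Set.Ioo (-(1/16):ℝ) (1/16)
    · obtain ⟨hy1, hy2⟩ := hy
      have hxy0 : (0:ℝ) ≤ x - y := by linarith
      have hxy1 : x - y ≤ 1 := by linarith
      have hsub : x - y - 1/2 = u - y := by rw [hu]; ring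
      by_cases hyu : y ≤ u
      · have h12 : (1/2:ℝ) ≤ x - y := by
          have : y ≤ x - 1/2 := hyu
          linarith
        rw [hright (x - y) ⟨h12, hxy1⟩, hsub,
          Set.indicator_of_mem (Set.mem_Iic.2 hyu)]
        rw [mul_add, Finset.mul_sum]
        have hsum : ∑ j ∈ Finset.range n, φ y * (c j * (u - y) ^ j)
            = ∑ j ∈ Finset.range n, c j * ((u - y) ^ j * φ y) :=
          Finset.sum_congr rfl fun j _ => by ring
        rw [hsum]; ring
      · have h12 : x - y ≤ 1/2 := by
          have : x - 1/2 < y := not_le.1 hyu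
          linarith
        rw [hleft (x - y) ⟨hxy0, h12⟩, hsub,
          Set.indicator_of_notMem (by simpa [Set.mem_Iic] using hyu)]
        rw [mul_add, Finset.mul_sum]
        have hsum : ∑ j ∈ Finset.range n, φ y * (c j * (u - y) ^ j)
            = ∑ j ∈ Finset.range n, c j * ((u - y) ^ j * φ y) :=
          Finset.sum_congr rfl fun j _ => by ring
        rw [hsum]; ring
    · have hφy : φ y = 0 := hsupp y hy
      rw [hφy]
      rw [Set.indicator_apply]
      split
      · rw [hφy]; simp
      · simp
  simp only [key]
  -- integrability facts
  have hint : ∀ m : ℕ, Integrable (fun y : ℝ => (u - y) ^ m * φ y) :=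
    fun m => integrable_sub_pow_mul hcont hsupp u m
  have hint1 : Integrable (fun y : ℝ =>
      A₀ * ((u - y) ^ n * φ y) + ∑ j ∈ Finset.range n, c j * ((u - y) ^ j * φ y)) := by
    refine Integrable.add ((hint n).const_mul _) ?_
    refine integrable_finset_sum _ fun j _ => ((hint j).const_mul _)
  have hint2 : Integrable (fun y : ℝ =>
      (A₁ - A₀) * Set.indicator (Set.Iic u) (fun y => (u - y) ^ n * φ y) y) :=
    (((hint n).indicator measurableSet_Iic).const_mul _)
  rw [integral_add hint1 hint2]
  have hzero1 : (∫ y : ℝ, (A₀ * ((u - y) ^ n * φ y)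
      + ∑ j ∈ Finset.range n, c j * ((u - y) ^ j * φ y))) = 0 := by
    rw [integral_add ((hint n).const_mul _)
      (integrable_finset_sum _ fun j _ => ((hint j).const_mul _))]
    rw [MeasureTheory.integral_const_mul,
      moment_vanish hcont hsupp hmom u (Nat.le_succ n), mul_zero]
    rw [integral_finset_sum _ (fun j _ => ((hint j).const_mul _))]
    rw [Finset.sum_eq_zero fun j hj => ?_, add_zero]
    rw [MeasureTheory.integral_const_mul,
      moment_vanish hcont hsupp hmom u (by
        have := Finset.mem_range.1 hj; omega), mul_zero]
  rw [hzero1, zero_add]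
  rw [MeasureTheory.integral_const_mul, MeasureTheory.integral_indicator measurableSet_Iic]
  -- identify with cauchyI and iterPrim
  have hfc : Continuous (fun y : ℝ => (u - y) ^ n * φ y) :=
    ((continuous_const.sub continuous_id).pow n).mul hcont
  have hf0 : ∀ y : ℝ, y ≤ -(1/16) → (u - y) ^ n * φ y = 0 := fun y hy => by
    rw [phi_zero_left hsupp hy, mul_zero]
  rw [integral_Iic_eq_intervalIntegral hfc hf0 u]
  have hC : (∫ y in (-1:ℝ)..u, (u - y) ^ n * φ y) = cauchyI φ n u := rfl
  rw [hC]
  have hIP : iterPrim φ (n+1) u = cauchyI φ n u / (n.factorial : ℝ) :=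
    iterPrim_eq_cauchyI hcont hsupp n u
  have hfne : ((n.factorial : ℕ) : ℝ) ≠ 0 := Nat.cast_ne_zero.2 (Nat.factorial_ne_zero n)
  have hCval : cauchyI φ n u = (n.factorial : ℝ) * iterPrim φ (n+1) u := by
    rw [hIP]; field_simp
  rw [hCval, abs_mul, abs_mul, abs_of_nonneg (by positivity : (0:ℝ) ≤ (n.factorial : ℝ))]
  ring
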